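/- Let (μ_n) be the moment sequence determined by the recurrence coefficients b_n = q^{n+1}[n+1]_q + q^{n−1}[n]_q and λ_n = q^{2n−1}([n]_q)^2 (via the weighted Motzkin path formula). Then μ_0 = 1 and μ_n = q·[n]_q! for all n ≥ 1. -/

import Mathlib

open Finset

namespace SS

variable {n : ℕ}

/-- `descB σ j = true` iff there is a descent between positions `j` and `j+1`
in the word `σ(1)σ(2)⋯σ(n)`. -/
def descB (σ : Equiv.Perm (Fin n)) (j : ℕ) : Bool :=
  if h : j + 1 < n then decide ((σ ⟨j+1, h⟩) < σ ⟨j, Nat.lt_of_succ_lt h⟩) else false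

/-- The index of the maximal increasing run containing position `p`. -/
def runIdx (σ : Equiv.Perm (Fin n)) (p : ℕ) : ℕ :=
  ((Finset.range p).filter (fun j => descB σ j = true)).card

/-- The index of the run containing the value `v`. -/
def runOf (σ : Equiv.Perm (Fin n)) (v : Fin n) : ℕ := runIdx σ (σ.symm v).val

/-- The number of maximal increasing runs of `σ`. -/
def runCount (σ : Equiv.Perm (Fin n)) : ℕ :=
  if n = 0 then 0 else runIdx σ n + 1

/-- `lsgAt σ v` : number of runs strictly to the left of (the run of) `v`
containing both an element smaller than `v` and an element greater than `v`. -/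
def lsgAt (σ : Equiv.Perm (Fin n)) (v : Fin n) : ℕ :=
  ((Finset.range (runCount σ)).filter (fun r => r < runOf σ v ∧
      (∃ a : Fin n, runOf σ a = r ∧ a < v) ∧ (∃ b : Fin n, runOf σ b = r ∧ v < b))).card

/-- `rsgAt σ v` : number of runs strictly to the right of `v`
containing both an element smaller than `v` and an element greater than `v`. -/
def rsgAt (σ : Equiv.Perm (Fin n)) (v : Fin n) : ℕ :=
  ((Finset.range (runCount σ)).filter (fun r => runOf σ v < r ∧
      (∃ a : Fin n, runOf σ a = r ∧ a < v) ∧ (∃ b : Fin n, runOf σ b = r ∧ v < b))).card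

def lsg (σ : Equiv.Perm (Fin n)) : ℕ := ∑ v : Fin n, lsgAt σ v
def rsg (σ : Equiv.Perm (Fin n)) : ℕ := ∑ v : Fin n, rsgAt σ v

/-- position `p` begins a maximal increasing run. -/
def startsB (σ : Equiv.Perm (Fin n)) (p : ℕ) : Bool := p == 0 || descB σ (p - 1)

/-- position `p` ends a maximal increasing run. -/
def endsB (σ : Equiv.Perm (Fin n)) (p : ℕ) : Bool := p + 1 == n || descB σ p

def openerB (σ : Equiv.Perm (Fin n)) (v : Fin n) : Bool :=
  startsB σ (σ.symm v).val && !endsB σ (σ.symm v).val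
def closerB (σ : Equiv.Perm (Fin n)) (v : Fin n) : Bool :=
  endsB σ (σ.symm v).val && !startsB σ (σ.symm v).val
def singB (σ : Equiv.Perm (Fin n)) (v : Fin n) : Bool :=
  startsB σ (σ.symm v).val && endsB σ (σ.symm v).val
def contB (σ : Equiv.Perm (Fin n)) (v : Fin n) : Bool :=
  !startsB σ (σ.symm v).val && !endsB σ (σ.symm v).val

def lsgOp (σ : Equiv.Perm (Fin n)) : ℕ :=
  ∑ v ∈ univ.filter (fun v : Fin n => openerB σ v = true), lsgAt σ v
def rsgOp (σ : Equiv.Perm (Fin n)) : ℕ :=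
  ∑ v ∈ univ.filter (fun v : Fin n => openerB σ v = true), rsgAt σ v
def lsgClos (σ : Equiv.Perm (Fin n)) : ℕ :=
  ∑ v ∈ univ.filter (fun v : Fin n => closerB σ v = true), lsgAt σ v
def rsgClos (σ : Equiv.Perm (Fin n)) : ℕ :=
  ∑ v ∈ univ.filter (fun v : Fin n => closerB σ v = true), rsgAt σ v
def lsgSing (σ : Equiv.Perm (Fin n)) : ℕ :=
  ∑ v ∈ univ.filter (fun v : Fin n => singB σ v = true), lsgAt σ v
def rsgSing (σ : Equiv.Perm (Fin n)) : ℕ :=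
  ∑ v ∈ univ.filter (fun v : Fin n => singB σ v = true), rsgAt σ v
def lsgCont (σ : Equiv.Perm (Fin n)) : ℕ :=
  ∑ v ∈ univ.filter (fun v : Fin n => contB σ v = true), lsgAt σ v
def rsgCont (σ : Equiv.Perm (Fin n)) : ℕ :=
  ∑ v ∈ univ.filter (fun v : Fin n => contB σ v = true), rsgAt σ v

/-- `[m]_q = 1 + q + ⋯ + q^{m-1}`. -/
def qint {R : Type*} [CommRing R] (q : R) (m : ℕ) : R := ∑ i ∈ Finset.range m, q ^ i

/-- `[n]_q! = [1]_q [2]_q ⋯ [n]_q`. -/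
def qfact {R : Type*} [CommRing R] (q : R) (n : ℕ) : R := ∏ m ∈ Finset.range n, qint q (m+1)

/-- `moment b lam l h` : sum of the weights of all weighted Motzkin paths with `l` steps
starting at height `h` and ending at height `0`, where up steps have weight `1`,
a level step at height `k` has weight `b k`, and a down step from height `k`
has weight `lam k`.  The `n`th moment of the corresponding monic orthogonal
polynomial sequence is `moment b lam n 0`. -/
def moment {R : Type*} [CommRing R] (b lam : ℕ → R) : ℕ → ℕ → R
  | 0, h => if h = 0 then 1 else 0
  | (l+1), h => moment b lam l (h+1) + b h * moment b lam l h +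
      (if h = 0 then 0 else lam h * moment b lam l (h-1))

end SS

namespace Stmt7Aux
open SS

def qb (q : ℚ) : ℕ → ℕ → ℚ
  | _, 0 => 1
  | 0, _+1 => 0
  | n+1, k+1 => q^(k+1) * qb q n (k+1) + qb q n k

lemma qb_zero (q : ℚ) (n : ℕ) : qb q n 0 = 1 := by cases n <;> rfl

lemma qb_zero_left (q : ℚ) (k : ℕ) : qb q 0 (k+1) = 0 := rfl

lemma qb_succ (q : ℚ) (n k : ℕ) :
    qb q (n+1) (k+1) = q^(k+1) * qb q n (k+1) + qb q n k := rfl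

lemma qint_zero (q : ℚ) : qint q 0 = 0 := rfl

lemma qint_one (q : ℚ) : qint q 1 = 1 := by simp [qint]

lemma qint_succ (q : ℚ) (n : ℕ) : qint q (n+1) = q * qint q n + 1 := geom_sum_succ

lemma qint_succ' (q : ℚ) (n : ℕ) : qint q (n+1) = q^n + qint q n := geom_sum_succ'

lemma qpow_eq (q : ℚ) (n : ℕ) : q^n = (q-1) * qint q n + 1 := by
  have h := geom_sum_mul q n
  unfold qint
  linear_combination -h

lemma qint_add (q : ℚ) (a b : ℕ) : qint q (a+b) = qint q a + q^a * qint q b := by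
  induction b with
  | zero => simp [qint_zero]
  | succ b ih =>
      rw [show a + (b+1) = (a+b)+1 by omega, qint_succ', ih, qint_succ', pow_add]
      ring

lemma qfact_succ (q : ℚ) (n : ℕ) : qfact q (n+1) = qfact q n * qint q (n+1) :=
  Finset.prod_range_succ _ n

lemma qfact_zero (q : ℚ) : qfact q 0 = 1 := by simp [qfact]

lemma qfact_one (q : ℚ) : qfact q 1 = 1 := by simp [qfact, qint_one]

lemma qb_big (q : ℚ) : ∀ n k, qb q n (n+k+1) = 0 := by
  intro n
  induction n with
  | zero => intro k; simp [qb_zero_left]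
  | succ n ih =>
      intro k
      rw [show n+1+k+1 = (n+k+1)+1 by omega, qb_succ]
      rw [show n+k+1+1 = n+(k+1)+1 by omega, ih (k+1), ih k]
      ring

lemma qb_diag (q : ℚ) : ∀ n, qb q n n = 1 := by
  intro n
  induction n with
  | zero => rfl
  | succ n ih =>
      have hb := qb_big q n 0
      rw [show n+0+1 = n+1 by omega] at hb
      rw [qb_succ, ih, hb]
      ring

lemma qb_one (q : ℚ) : ∀ n, qb q n 1 = qint q n := by
  intro n
  induction n with
  | zero => simp [qb_zero_left, qint_zero]
  | succ n ih =>
      rw [show (1:ℕ) = 0+1 from rfl, qb_succ, ih, qb_zero, qint_succ]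
      ring

lemma qb_sub_one (q : ℚ) : ∀ n, qb q (n+1) n = qint q (n+1) := by
  intro n
  induction n with
  | zero => rw [qb_zero, qint_one]
  | succ n ih =>
      rw [qb_succ, ih, qb_diag, qint_succ' q (n+1), qint_succ' q n]
      ring

lemma habs (q : ℚ) : ∀ m k, qint q (k+1) * qb q (k+m+1) (k+1) = qint q (m+1) * qb q (k+m+1) k := by
  intro m
  induction m with
  | zero =>
      intro k
      rw [show k+0+1 = k+1 by omega, qb_diag, qb_sub_one, qint_one]
      ring
  | succ m ih =>
      intro k
      induction k with
      | zero =>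
          simp only [Nat.zero_add]
          rw [qb_one, qb_zero, qint_one]
          ring
      | succ k ihk =>
          rw [show k+1+(m+1)+1 = (k+m+2)+1 by omega]
          rw [qb_succ q (k+m+2) (k+1), qb_succ q (k+m+2) k]
          have ih1 := ih (k+1)
          rw [show k+1+m+1 = k+m+2 by omega] at ih1
          rw [show k+(m+1)+1 = k+m+2 by omega] at ihk
          have e1 := qint_succ' q (k+1)
          have e2 := qint_succ q (m+1)
          linear_combination q^(k+2) * ih1 + ihk + qb q (k+m+2) (k+1) * e1
            - q^(k+1) * qb q (k+m+2) (k+1) * e2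

lemma cabs (q : ℚ) : ∀ n k, qint q (k+1) * qb q (n+1) (k+1) = qint q (n+1) * qb q n k := by
  intro n k
  rcases lt_trichotomy n k with h | h | h
  · obtain ⟨d, rfl⟩ : ∃ d, k = n + d := ⟨k - n, by omega⟩
    obtain ⟨e, rfl⟩ : ∃ e, d = e + 1 := ⟨d - 1, by omega⟩
    rw [show n+(e+1)+1 = (n+1)+e+1 by omega, qb_big]
    rw [show n+(e+1) = n+e+1 by omega, qb_big]
    ring
  · subst h
    rw [qb_diag, qb_diag]
  · obtain ⟨m, rfl⟩ : ∃ m, n = k + m + 1 := ⟨n - k - 1, by omega⟩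
    rw [qb_succ q (k+m+1) k]
    have h1 := habs q m k
    have h2 := qint_add q (k+1) (m+1)
    rw [show k+1+(m+1) = k+m+1+1 by omega] at h2
    linear_combination q^(k+1) * h1 - qb q (k+m+1) k * h2

lemma keyid (q t B L X Y Z W : ℚ) (ht : t = (q-1)*B+1)
    (r1 : B*(t*Y+X) = L*X) (r2 : (1+q*B)*(q*t*Z+Y) = L*Y)
    (r3 : (1+q+q^2*B)*(q^2*t*W+Z) = L*Z) :
    (1+q*L)*(1+q*B)*((t*Y+X)+q^2*t*(q*t*Z+Y))
      = q^3*t^2*(1+q*B)*(1+q+q^2*B)*(Z+q^3*t*W)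
        + (q^2*t*(1+q+q^2*B)+t*(1+q*B))*(1+q*B)*(Y+q^2*t*Z)
        + (1+q*B)^2*(X+q*t*Y) := by
  subst ht
  linear_combination (-q-q^2*B)*r1
    + (-q+q*B-2*q^2*B+q^2*B^2-q^3+q^3*B-q^3*B^2-2*q^4*B+q^4*B^2-q^5*B^2)*r2
    + (-q^4+2*q^4*B-q^4*B^2-3*q^5*B+4*q^5*B^2-q^5*B^3-3*q^6*B^2+2*q^6*B^3-q^7*B^3)*r3

def F (q : ℚ) : ℕ → ℕ → ℚ
  | 0, 0 => 1
  | 0, _+1 => 0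
  | l+1, 0 => q * qfact q (l+1)
  | l+1, h+1 => q^((h+1)*(h+1)) * qfact q (h+1) * qfact q (l+1) *
      (qb q l h + q^(h+2) * qb q l (h+1))

def bq (q : ℚ) (m : ℕ) : ℚ := q ^ ((m : ℤ) + 1) * qint q (m + 1) + q ^ ((m : ℤ) - 1) * qint q m
def lamq (q : ℚ) (m : ℕ) : ℚ := q ^ (2 * (m : ℤ) - 1) * (qint q m) ^ 2

lemma zp1 (q : ℚ) (n : ℕ) : q ^ ((n : ℤ) + 1) = q^(n+1) := by
  rw [show ((n : ℤ) + 1) = ((n+1 : ℕ) : ℤ) by push_cast; ring, zpow_natCast]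

lemma zp2 (q : ℚ) (n : ℕ) : q ^ (((n+1 : ℕ) : ℤ) - 1) = q^n := by
  rw [show (((n+1 : ℕ) : ℤ) - 1) = ((n : ℕ) : ℤ) by push_cast; ring, zpow_natCast]

lemma zp3 (q : ℚ) (n : ℕ) : q ^ (2 * ((n+1 : ℕ) : ℤ) - 1) = q^(2*n+1) := by
  rw [show (2 * ((n+1 : ℕ) : ℤ) - 1) = ((2*n+1 : ℕ) : ℤ) by push_cast; ring, zpow_natCast]

lemma Fstep (q : ℚ) : ∀ l h, F q (l+1) h = F q l (h+1) + bq q h * F q l h +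
    (if h = 0 then 0 else lamq q h * F q l (h-1)) := by
  intro l h
  rcases l with _ | j
  · rcases h with _ | _ | h
    · -- l = 0, h = 0
      simp [F, bq, qint_zero, qint_one, qfact_zero, qfact_one, qfact_succ]
    · -- l = 0, h = 1
      simp [F, bq, lamq, qint_zero, qint_one, qfact_one, qb]
    · -- l = 0, h ≥ 2
      simp [F, bq, lamq, qb]
  · rcases h with _ | _ | k
    · -- h = 0
      simp only [F, if_pos rfl, bq]
      rw [qb_one, qb_zero, qfact_succ q (j+1), qint_succ q (j+1), qint_succ q j,
        qfact_one, qint_one, qint_zero, zp1 q 0]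
      push_cast
      ring_nf
    · -- h = 1
      simp only [Nat.add_sub_cancel, F, bq, lamq, if_neg (Nat.one_ne_zero), qb_zero]
      rw [zp1 q (0+1), zp2 q 0, zp3 q 0]
      rw [qb_succ q j 0, qb_zero]
      rw [qfact_succ q (j+1), qint_succ q (j+1)]
      have hf1 : qfact q (0+1) = 1 := qfact_one q
      have hf1' : qfact q 1 = 1 := qfact_one q
      have hf2 : qfact q (1+1) = q + 1 := by
        rw [qfact_succ q 1, qfact_one, qint_succ q 1, qint_one]; ring
      have hi1 : qint q (0+1) = 1 := qint_one q
      have hi2 : qint q (0+1+1) = q + 1 := by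
        rw [qint_succ q (0+1), qint_one]; ring
      rw [hf1, hf2, hi2, hi1]
      have r := cabs q j 1
      rw [qb_succ q j 1] at r
      have hi2' : qint q (1+1) = q + 1 := by rw [qint_succ q 1, qint_one]; ring
      rw [hi2'] at r
      have S : qint q (j+1) = q * qb q j 1 + 1 := by rw [qb_one]; exact qint_succ q j
      linear_combination (-(q^5)*qfact q (j+1))*r + (q^2+q^4)*qfact q (j+1)*S
    · -- h = k+2 : main case
      simp only [Nat.succ_sub_one, F, bq, lamq, if_neg (Nat.succ_ne_zero _)]
      rw [zp1 q (k+1+1), zp2 q (k+1), zp3 q (k+1)]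
      rw [qb_succ q j (k+1), qb_succ q j k]
      rw [qfact_succ q (j+1), qint_succ q (j+1)]
      rw [qfact_succ q (k+1+1), qfact_succ q (k+1), qint_succ q (k+1+1), qint_succ q (k+1)]
      have ht := qpow_eq q (k+1)
      have r1 : qint q (k+1) * (q^(k+1) * qb q j (k+1) + qb q j k)
          = qint q (j+1) * qb q j k := by
        have h := cabs q j k
        rw [qb_succ q j k] at h
        exact h
      have r2 : (1 + q * qint q (k+1)) * (q * q^(k+1) * qb q j (k+2) + qb q j (k+1))
          = qint q (j+1) * qb q j (k+1) := by
        have h := cabs q j (k+1)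
        rw [qb_succ q j (k+1), qint_succ q (k+1)] at h
        linear_combination h
      have r3 : (1 + q + q^2 * qint q (k+1)) * (q^2 * q^(k+1) * qb q j (k+3) + qb q j (k+2))
          = qint q (j+1) * qb q j (k+2) := by
        have h := cabs q j (k+2)
        rw [qb_succ q j (k+2), qint_succ q (k+2), qint_succ q (k+1)] at h
        linear_combination h
      have KEY := keyid q (q^(k+1)) (qint q (k+1)) (qint q (j+1))
        (qb q j k) (qb q j (k+1)) (qb q j (k+2)) (qb q j (k+3)) ht r1 r2 r3
      linear_combination (q^((k+2)*(k+2)) * qfact q (k+1) * qfact q (j+1)) * KEY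

lemma Mform (q : ℚ) : ∀ l h, moment (bq q) (lamq q) l h = F q l h := by
  intro l
  induction l with
  | zero =>
      intro h
      cases h with
      | zero => rfl
      | succ h => rfl
  | succ l ih =>
      intro h
      show moment (bq q) (lamq q) l (h+1) + bq q h * moment (bq q) (lamq q) l h +
        (if h = 0 then 0 else lamq q h * moment (bq q) (lamq q) l (h-1)) = _
      rw [ih, ih]
      rcases h with _ | h
      · simpa using (Fstep q l 0).symm
      · rw [ih]
        simpa using (Fstep q l (h+1)).symm

end Stmt7Aux

open SS in
/-- Moments for `b_n = q^{n+1}[n+1]_q + q^{n-1}[n]_q`, `λ_n = q^{2n-1}[n]_q^2`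
are `μ_0 = 1` and `μ_n = q [n]_q!` for `n ≥ 1`. -/
theorem stmt7 (q : ℚ) (hq : q ≠ 0) :
    moment (fun m => q ^ ((m : ℤ) + 1) * qint q (m + 1) + q ^ ((m : ℤ) - 1) * qint q m)
           (fun m => q ^ (2 * (m : ℤ) - 1) * (qint q m) ^ 2) 0 0 = 1 ∧
    ∀ n : ℕ, 1 ≤ n →
      moment (fun m => q ^ ((m : ℤ) + 1) * qint q (m + 1) + q ^ ((m : ℤ) - 1) * qint q m)
             (fun m => q ^ (2 * (m : ℤ) - 1) * (qint q m) ^ 2) n 0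
        = q * qfact q n := by
  constructor
  · exact Stmt7Aux.Mform q 0 0
  · intro n hn
    obtain ⟨m, rfl⟩ : ∃ m, n = m + 1 := ⟨n - 1, by omega⟩
    have h := Stmt7Aux.Mform q (m+1) 0
    rw [show Stmt7Aux.F q (m+1) 0 = q * qfact q (m+1) from rfl] at h
    exact h
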